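/- For every power circuit (Π,δ_Π) with n = |Π| ≥ 1 nodes and every marking M on Π, there exist a reduced power circuit (Γ,δ) and a compact marking M̃ on Γ such that ε(M̃) = ε(M), the number of maximal chains of Γ is at most n + 1, and |Γ| ≤ (n+1)² · (log₂ n + 2). -/

import Mathlib

namespace NAFAux

def Y (x : ℤ) : ℕ → ℤ
  | 0 => x
  | p+1 => (Y x p - (if 2 ∣ Y x p then 0 else 2 - Y x p % 4)) / 2

def D (x : ℤ) (p : ℕ) : ℤ := if 2 ∣ Y x p then 0 else 2 - Y x p % 4

lemma Y_succ (x : ℤ) (p : ℕ) : Y x (p+1) = (Y x p - D x p) / 2 := rfl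

lemma two_dvd_sub (x : ℤ) (p : ℕ) : 2 ∣ Y x p - D x p := by
  unfold D; split
  · omega
  · next h => omega

lemma four_dvd_sub (x : ℤ) (p : ℕ) (h : D x p ≠ 0) : 4 ∣ Y x p - D x p := by
  unfold D at *; split at h
  · omega
  · next h2 => omega

lemma Y_succ_mul (x : ℤ) (p : ℕ) : 2 * Y x (p+1) = Y x p - D x p := by
  rw [Y_succ]
  exact Int.mul_ediv_cancel' (two_dvd_sub x p)

lemma D_range (x : ℤ) (p : ℕ) : D x p = -1 ∨ D x p = 0 ∨ D x p = 1 := by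
  unfold D; split
  · omega
  · next h => omega

lemma D_eq_zero (x : ℤ) (p : ℕ) (h : 2 ∣ Y x p) : D x p = 0 := by
  unfold D; simp [h]

lemma D_succ_of_ne (x : ℤ) (p : ℕ) (h : D x p ≠ 0) : D x (p+1) = 0 := by
  apply D_eq_zero
  have h4 := four_dvd_sub x p h
  have h2 := Y_succ_mul x p
  omega

noncomputable def sp (x : ℤ) (p : ℕ) : ℤ := ∑ q ∈ Finset.range p, D x q * 2^q

lemma repr (x : ℤ) : ∀ p, x = sp x p + 2^p * Y x p := by
  intro p; induction p with
  | zero => simp [sp, Y]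
  | succ p ih =>
    have h2 := Y_succ_mul x p
    rw [sp, Finset.sum_range_succ, ← sp]
    have : (2:ℤ)^(p+1) * Y x (p+1) = 2^p * (2 * Y x (p+1)) := by ring
    rw [this, h2]; linarith [ih]

lemma sp_bound (x : ℤ) : ∀ p, 3 * |sp x p| < 2^(p+1) ∧ (D x p ≠ 0 → 3 * |sp x p| < 2^p) := by
  intro p; induction p with
  | zero => simp [sp]
  | succ p ih =>
    have hstep : sp x (p+1) = sp x p + D x p * 2^p := by
      rw [sp, Finset.sum_range_succ, ← sp]
    by_cases h : D x p = 0
    · rw [hstep, h]; simp only [zero_mul, add_zero]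
      have : (2:ℤ)^(p+1) < 2^(p+1+1) := by
        have : (0:ℤ) < 2^(p+1) := by positivity
        calc (2:ℤ)^(p+1) < 2^(p+1) + 2^(p+1) := by linarith
          _ = 2^(p+1+1) := by ring
      exact ⟨lt_trans ih.1 this, fun _ => ih.1⟩
    · have hs := ih.2 h
      have hd : |D x p| ≤ 1 := by rcases D_range x p with h'|h'|h' <;> simp [h']
      constructor
      · have : |sp x (p+1)| ≤ |sp x p| + |D x p| * 2^p := by
          rw [hstep]; refine le_trans (abs_add_le _ _) ?_
          simp [abs_mul, abs_pow]
        have h2 : |D x p| * 2^p ≤ 2^p := by nlinarith [pow_pos (by norm_num : (0:ℤ) < 2) p]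
        have : 3 * |sp x (p+1)| ≤ 3 * |sp x p| + 3 * 2^p := by linarith
        have hp2 : (2:ℤ)^(p+1+1) = 4 * 2^p := by ring
        linarith
      · intro h'; exact absurd (D_succ_of_ne x p h) h'

lemma zero_digit (x H L : ℤ) (p : ℕ) (hx : x = 2^(p+1) * H + L) (hL : 3 * |L| < 2^p) :
    D x p = 0 := by
  have hr := repr x p
  have key : 2^p * (Y x p - 2 * H) = L - sp x p := by
    have h2 : x - sp x p = 2^p * Y x p := by linarith
    have h3 : (2:ℤ)^(p+1) * H = 2^p * (2*H) := by ring
    rw [hx, h3] at h2; linarith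
  have hb := (sp_bound x p).1
  have habs : 3 * (2^p * |Y x p - 2*H|) < 3 * 2^p := by
    have : |2^p * (Y x p - 2*H)| = 2^p * |Y x p - 2*H| := by
      rw [abs_mul, abs_pow]; norm_num
    rw [← this, key]
    calc 3 * |L - sp x p| ≤ 3 * |L| + 3 * |sp x p| := by
            have := abs_sub L (sp x p); linarith
      _ < 2^p + 2^(p+1) := by linarith
      _ = 3 * 2^p := by ring
  have hY : Y x p = 2 * H := by
    have hp : (0:ℤ) < 2^p := by positivity
    have : |Y x p - 2*H| < 1 := by nlinarith
    have := abs_lt.mp this; omega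
  exact D_eq_zero x p ⟨H, hY⟩

lemma Y_eq_zero (x : ℤ) (p : ℕ) (h3 : 3 * |x| ≤ 2^p) : Y x p = 0 := by
  have hr := repr x p
  have hb := (sp_bound x p).1
  have hp : (0:ℤ) < 2^p := by positivity
  have h1 : 2^p * |Y x p| = |x - sp x p| := by
    rw [show x - sp x p = 2^p * Y x p by linarith, abs_mul, abs_pow]; norm_num
  have h2 : 3 * |x - sp x p| < 3 * 2^p := by
    calc 3 * |x - sp x p| ≤ 3 * |x| + 3 * |sp x p| := by
          have := abs_sub x (sp x p); linarith
      _ < 2^p + 2^(p+1) := by linarith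
      _ = 3 * 2^p := by ring
  have : |Y x p| < 1 := by nlinarith
  have := abs_lt.mp this; omega

lemma eval_eq (x : ℤ) (p : ℕ) (h3 : 3 * |x| ≤ 2^p) : x = sp x p := by
  have := repr x p; rw [Y_eq_zero x p h3] at this; linarith


lemma Y_zero_mono (x : ℤ) (p : ℕ) (h : Y x p = 0) : ∀ q, p ≤ q → Y x q = 0 := by
  intro q hq
  induction q with
  | zero =>
    have : p = 0 := by omega
    subst this; exact h
  | succ q ih =>
    rcases Nat.lt_or_ge p (q+1) with h'|h'
    · have hyq : Y x q = 0 := ih (by omega)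
      have := Y_succ_mul x q
      have hd : D x q = 0 := D_eq_zero x q (by rw [hyq]; exact ⟨0, by ring⟩)
      omega
    · have : p = q + 1 := by omega
      rw [← this]; exact h

lemma D_eq_zero_of_Y (x : ℤ) (p q : ℕ) (h : Y x p = 0) (hq : p ≤ q) : D x q = 0 :=
  D_eq_zero x q (by rw [Y_zero_mono x p h q hq]; exact ⟨0, by ring⟩)

lemma two_pow_lt_of_D_ne (x : ℤ) (p : ℕ) (h : D x p ≠ 0) : 2^p < 3 * |x| := by
  by_contra hc
  push_neg at hc
  exact h (D_eq_zero x p (by rw [Y_eq_zero x p hc]; exact ⟨0, by ring⟩))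

lemma three_le_pow (v : ℕ) (hv : 4 ≤ v) : 3 * v ≤ 2^v := by
  induction v with
  | zero => omega
  | succ v ih =>
    rcases Nat.lt_or_ge v 4 with h|h
    · have : v = 3 := by omega
      subst this; norm_num
    · have h1 := ih (by omega)
      have h2 : 2^(v+1) = 2^v + 2^v := by rw [pow_succ]; ring
      omega

lemma pos_lt_val (v : ℕ) (p : ℕ) (h : D (v : ℤ) p ≠ 0) : p < v := by
  have hpow := two_pow_lt_of_D_ne _ _ h
  rw [abs_of_nonneg (by positivity : (0:ℤ) ≤ (v:ℤ))] at hpow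
  have hpow' : 2^p < 3 * v := by exact_mod_cast hpow
  by_contra hc
  push_neg at hc
  have hvp : 2^v ≤ 2^p := Nat.pow_le_pow_right (by norm_num) hc
  rcases Nat.lt_or_ge v 4 with hv|hv
  · -- v ≤ 3; also v ≥ 1 else 3*v = 0
    have hv1 : 1 ≤ v := by
      by_contra h0
      have : v = 0 := by omega
      subst this; simp at hpow'
    have hz : Y (v : ℤ) v = 0 := by
      interval_cases v <;> decide
    exact h (D_eq_zero_of_Y _ _ _ hz hc)
  · have := three_le_pow v hv; omega

lemma nonadjacent (x : ℤ) (a b : ℕ) (ha : D x a ≠ 0) (hb : D x b ≠ 0) (hab : a < b) :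
    a + 2 ≤ b := by
  rcases Nat.lt_or_ge (a+1) b with h|h
  · omega
  · have : b = a + 1 := by omega
    subst this
    exact absurd (D_succ_of_ne x a ha) hb


def wB (n : ℕ) : ℕ := Nat.log2 (3*n) + 1
def bB (n : ℕ) : ℕ := Nat.log2 (3 * wB n) + 1

def SS (n : ℕ) (k : Fin n → ℕ) : Finset ℕ :=
  Finset.range (bB n + 1) ∪ Finset.univ.biUnion (fun P => Finset.Ico (k P) (k P + wB n + 1))

lemma three_n_lt (n : ℕ) : 3 * n < 2 ^ wB n := Nat.lt_log2_self

lemma three_w_lt (n : ℕ) : 3 * wB n < 2 ^ bB n := Nat.lt_log2_self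

lemma log2_eq {m v : ℕ} (h1 : 2^v ≤ m) (h2 : m < 2^(v+1)) : Nat.log2 m = v := by
  have hm : m ≠ 0 := by
    have h0 : 0 < 2^v := pow_pos (by norm_num) v
    omega
  have ha : Nat.log2 m < v + 1 := (Nat.log2_lt hm).mpr h2
  have hb : v ≤ Nat.log2 m := (Nat.le_log2 hm).mpr h1
  omega

lemma digit_zero_out (n : ℕ) (k : Fin n → ℕ) (c : Fin n → ℤ) (hc : ∀ Q, |c Q| ≤ 1)
    (j : ℕ) (hj : j ≤ wB n) (p : ℕ) (hp : p ∉ SS n k) :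
    D (∑ Q, c Q * 2^(k Q) + (j:ℤ)) p = 0 := by
  classical
  have hpb : bB n + 1 ≤ p := by
    by_contra h
    exact hp (Finset.mem_union_left _ (Finset.mem_range.mpr (by omega)))
  have hblk : ∀ Q : Fin n, p < k Q ∨ k Q + wB n + 1 ≤ p := by
    intro Q
    by_contra h; push_neg at h
    exact hp (Finset.mem_union_right _ (Finset.mem_biUnion.mpr
      ⟨Q, Finset.mem_univ Q, Finset.mem_Ico.mpr ⟨by omega, by omega⟩⟩))
  set hi := Finset.univ.filter (fun Q : Fin n => p + 1 ≤ k Q) with hhi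
  set lo := Finset.univ.filter (fun Q : Fin n => ¬ (p + 1 ≤ k Q)) with hlo
  set H : ℤ := ∑ Q ∈ hi, c Q * 2^(k Q - (p+1)) with hH
  set L : ℤ := (∑ Q ∈ lo, c Q * 2^(k Q)) + (j:ℤ) with hL
  have hlow : ∀ Q ∈ lo, k Q + wB n + 1 ≤ p := by
    intro Q hQ
    have h1 : ¬ (p + 1 ≤ k Q) := (Finset.mem_filter.mp hQ).2
    rcases hblk Q with h|h
    · omega
    · exact h
  apply zero_digit _ H L p
  · rw [hL, hH, Finset.mul_sum,
      ← Finset.sum_filter_add_sum_filter_not Finset.univ (fun Q => p + 1 ≤ k Q)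
        (fun Q => c Q * 2^(k Q)), ← hhi, ← hlo]
    have hcg : ∀ Q ∈ hi, (2:ℤ)^(p+1) * (c Q * 2^(k Q - (p+1))) = c Q * 2^(k Q) := by
      intro Q hQ
      have hQ' : p + 1 ≤ k Q := (Finset.mem_filter.mp hQ).2
      rw [show (2:ℤ)^(p+1) * (c Q * 2^(k Q - (p+1))) = c Q * (2^(p+1) * 2^(k Q - (p+1))) by ring,
        ← pow_add, Nat.add_sub_cancel' hQ']
    rw [Finset.sum_congr rfl hcg]; ring
  · -- 3 * |L| < 2 ^ p
    set A : ℤ := ∑ Q ∈ lo, 2^(k Q) with hA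
    have hA0 : 0 ≤ A := Finset.sum_nonneg (fun Q _ => by positivity)
    have habsL : |L| ≤ A + (j:ℤ) := by
      rw [hL]
      refine le_trans (abs_add_le _ _) ?_
      have h1 : |(∑ Q ∈ lo, c Q * 2^(k Q))| ≤ A := by
        refine le_trans (Finset.abs_sum_le_sum_abs _ _) ?_
        rw [hA]
        refine Finset.sum_le_sum (fun Q _ => ?_)
        rw [abs_mul, abs_pow]
        have := hc Q
        have h2 : |(2:ℤ)| = 2 := by norm_num
        rw [h2]
        nlinarith [pow_pos (by norm_num : (0:ℤ) < 2) (k Q)]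
      have h2 : |(j:ℤ)| = (j:ℤ) := abs_of_nonneg (by positivity)
      rw [h2]; linarith
    have he4 : A * (2 * 2^(wB n)) ≤ (n:ℤ) * 2^p := by
      have h1 : A * (2 * 2^(wB n)) = ∑ Q ∈ lo, 2^(k Q + wB n + 1) := by
        rw [hA, Finset.sum_mul]
        refine Finset.sum_congr rfl (fun Q _ => ?_)
        rw [show k Q + wB n + 1 = k Q + (wB n + 1) by ring, pow_add, pow_succ]
        ring
      rw [h1]
      calc (∑ Q ∈ lo, (2:ℤ)^(k Q + wB n + 1)) ≤ ∑ _Q ∈ lo, (2:ℤ)^p := by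
            refine Finset.sum_le_sum (fun Q hQ => ?_)
            exact pow_le_pow_right₀ (by norm_num) (hlow Q hQ)
        _ = (lo.card : ℤ) * 2^p := by rw [Finset.sum_const]; push_cast; ring
        _ ≤ (n:ℤ) * 2^p := by
            have hcard : lo.card ≤ n := le_trans (Finset.card_filter_le _ _) (by simp)
            have hp2 : (0:ℤ) < 2^p := by positivity
            have hcard' : (lo.card : ℤ) ≤ (n:ℤ) := by exact_mod_cast hcard
            nlinarith
    have hX : (0:ℤ) < 2^p := by positivity
    have hW : (0:ℤ) < 2^(wB n) := by positivity
    have e1 : 3 * (n:ℤ) + 1 ≤ 2^(wB n) := by exact_mod_cast three_n_lt n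
    have e2 : 3 * (wB n : ℤ) + 1 ≤ 2^(bB n) := by exact_mod_cast three_w_lt n
    have e3 : (2:ℤ)^(bB n) * 2 ≤ 2^p := by
      have h1 : (2:ℕ)^(bB n+1) ≤ 2^p := Nat.pow_le_pow_right (by norm_num) hpb
      calc (2:ℤ)^(bB n) * 2 = 2^(bB n+1) := by rw [pow_succ]
        _ ≤ 2^p := by exact_mod_cast h1
    have hjz : (j:ℤ) ≤ (wB n:ℤ) := by exact_mod_cast hj
    have hj0 : (0:ℤ) ≤ (j:ℤ) := by positivity
    have t1 : 3*(n:ℤ)*2^p ≤ 2^(wB n) * 2^p - 2^p := by nlinarith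
    have t2 : 6*(j:ℤ)*2^(wB n) ≤ 2^p * 2^(wB n) - 2*2^(wB n) := by nlinarith
    have t3 : 3 * |L| * (2 * 2^(wB n)) ≤ 3*(A * (2*2^(wB n))) + 6*(j:ℤ)*2^(wB n) := by
      nlinarith [abs_nonneg L]
    have t4 : 3 * |L| * (2 * 2^(wB n)) < 2^p * (2 * 2^(wB n)) := by nlinarith
    exact lt_of_mul_lt_mul_right t4 (by positivity)

lemma zero_mem_SS (n : ℕ) (k : Fin n → ℕ) : 0 ∈ SS n k :=
  Finset.mem_union_left _ (Finset.mem_range.mpr (by omega))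

lemma closure_SS (n : ℕ) (k : Fin n → ℕ) (c : Fin n → Fin n → ℤ)
    (hc : ∀ P Q, c P Q = -1 ∨ c P Q = 0 ∨ c P Q = 1)
    (hk : ∀ P, (k P : ℤ) = ∑ Q, c P Q * 2^(k Q))
    (v : ℕ) (hv : v ∈ SS n k) (p : ℕ) (hD : D (v:ℤ) p ≠ 0) : p ∈ SS n k ∧ p < v := by
  have hlt : p < v := pos_lt_val v p hD
  refine ⟨?_, hlt⟩
  rcases Finset.mem_union.mp hv with h|h
  · exact Finset.mem_union_left _ (Finset.mem_range.mpr (by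
      have := Finset.mem_range.mp h; omega))
  · obtain ⟨P, _, hP⟩ := Finset.mem_biUnion.mp h
    have hP' := Finset.mem_Ico.mp hP
    by_contra hp
    have hveq : (v:ℤ) = ∑ Q, c P Q * 2^(k Q) + ((v - k P : ℕ) : ℤ) := by
      rw [← hk P]
      have : (((v - k P : ℕ)) : ℤ) = (v:ℤ) - (k P : ℤ) := by
        have := hP'.1; push_cast [Nat.cast_sub this]; ring
      rw [this]; ring
    rw [hveq] at hD
    exact hD (digit_zero_out n k (c P)
      (fun Q => by rcases hc P Q with h'|h'|h' <;> simp [h'])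
      (v - k P) (by omega) p hp)

lemma sum_over_S (S : Finset ℕ) (x : ℤ) (h : ∀ p, D x p ≠ 0 → p ∈ S) :
    ∑ p ∈ S, D x p * 2^p = x := by
  classical
  set m := (S.sup id) + x.natAbs + 3 with hm
  have hsub : S ⊆ Finset.range m := by
    intro p hp; rw [Finset.mem_range]
    have : p ≤ S.sup id := Finset.le_sup (f := id) hp
    omega
  have h3 : 3 * |x| ≤ 2^m := by
    have h2 : 3 * x.natAbs ≤ 2^m := by
      have ha := Nat.lt_two_pow_self (n := x.natAbs)
      have hmono : 2^(x.natAbs + 2) ≤ 2^m := Nat.pow_le_pow_right (by norm_num) (by omega)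
      have hb : 3 * x.natAbs ≤ 2^(x.natAbs+2) := by
        calc 3 * x.natAbs ≤ 4 * x.natAbs := by omega
          _ ≤ 4 * 2^x.natAbs := by omega
          _ = 2^(x.natAbs+2) := by ring
      omega
    calc 3 * |x| = ((3 * x.natAbs : ℕ) : ℤ) := by rw [Int.abs_eq_natAbs]; push_cast; ring
      _ ≤ ((2^m : ℕ) : ℤ) := by exact_mod_cast h2
      _ = 2^m := by push_cast; ring
  calc ∑ p ∈ S, D x p * 2^p = ∑ p ∈ Finset.range m, D x p * 2^p := by
        refine Finset.sum_subset hsub (fun p _ hp => ?_)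
        rcases Classical.em (D x p = 0) with h0|h0
        · rw [h0]; ring
        · exact absurd (h p h0) hp
    _ = x := (eval_eq x m h3).symm

lemma abs_real_ge_two (a b : ℕ) (h : a + 2 ≤ b) : 2 ≤ |(a:ℝ) - (b:ℝ)| := by
  rw [abs_sub_comm, abs_of_nonneg (by
    have : (a:ℝ) ≤ b := by exact_mod_cast (by omega : a ≤ b)
    linarith)]
  have : (a:ℝ) + 2 ≤ (b:ℝ) := by exact_mod_cast h
  linarith

lemma card_SS (n : ℕ) (k : Fin n → ℕ) : (SS n k).card ≤ (bB n + 1) + n * (wB n + 1) := by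
  classical
  refine le_trans (Finset.card_union_le _ _) ?_
  have h1 : (Finset.range (bB n + 1)).card = bB n + 1 := Finset.card_range _
  have h2 : (Finset.univ.biUnion (fun P : Fin n => Finset.Ico (k P) (k P + wB n + 1))).card
      ≤ n * (wB n + 1) := by
    refine le_trans (Finset.card_biUnion_le) ?_
    have : ∀ P : Fin n, (Finset.Ico (k P) (k P + wB n + 1)).card = wB n + 1 := by
      intro P; rw [Nat.card_Ico]; omega
    rw [Finset.sum_congr rfl (fun P _ => this P), Finset.sum_const]
    simp [mul_comm]
  omega

lemma wB_le (n : ℕ) (hn : 1 ≤ n) : wB n ≤ Nat.log2 n + 3 := by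
  have h1 : 3 * n < 2 ^ (Nat.log2 n + 3) := by
    have := Nat.lt_log2_self (n := n)
    have h2 : 2 ^ (Nat.log2 n + 3) = 4 * 2 ^ (Nat.log2 n + 1) := by ring
    omega
  have := (Nat.log2_lt (by omega : 3 * n ≠ 0)).mpr h1
  unfold wB; omega

lemma bB_le (n : ℕ) (hn : 1 ≤ n) : bB n ≤ Nat.log2 n + 4 := by
  have hw := wB_le n hn
  have hl : Nat.log2 n + 1 ≤ 2 ^ (Nat.log2 n) := Nat.lt_two_pow_self
  have h1 : 3 * wB n < 2 ^ (Nat.log2 n + 4) := by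
    have h2 : 2 ^ (Nat.log2 n + 4) = 16 * 2 ^ (Nat.log2 n) := by ring
    omega
  have hwpos : 3 * wB n ≠ 0 := by unfold wB; omega
  have := (Nat.log2_lt hwpos).mpr h1
  unfold bB; omega

end NAFAux



/-- A *power circuit* `(Γ, δ)`: a finite dag on nodes `Fin n` with edge labels
`δ P Q ∈ {−1,0,1}` (edges are the pairs with `δ P Q ≠ 0`), acyclic, together with the
node evaluation `ε` which satisfies the defining recursion `ε P = 2 ^ ε(Λ_P)`
(where `Λ_P = δ P ·` is the successor marking of `P` and
`ε(Λ_P) = Σ_Q δ P Q · ε Q`), and such that every node evaluates to an element of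
`2^ℕ`. -/
structure PowerCircuit where
  n : ℕ
  δ : Fin n → Fin n → ℤ
  δ_range : ∀ P Q, δ P Q = -1 ∨ δ P Q = 0 ∨ δ P Q = 1
  acyclic : WellFounded fun Q P : Fin n => δ P Q ≠ 0
  ε : Fin n → ℝ
  ε_eq : ∀ P, ε P = (2 : ℝ) ^ (∑ Q, (δ P Q : ℝ) * ε Q)
  ε_pow : ∀ P, ∃ k : ℕ, ε P = (2 : ℝ) ^ k

namespace PowerCircuit

/-- `ε(Λ_P)`, the evaluation of the successor marking of the node `P`. -/
noncomputable def lamVal (Γ : PowerCircuit) (P : Fin Γ.n) : ℝ :=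
  ∑ Q, (Γ.δ P Q : ℝ) * Γ.ε Q

/-- The evaluation `ε(M) = Σ_P M(P)·ε(P)` of a marking `M`. -/
noncomputable def evalM (Γ : PowerCircuit) (M : Fin Γ.n → ℤ) : ℝ :=
  ∑ Q, (M Q : ℝ) * Γ.ε Q

/-- A marking takes values in `{−1,0,1}`. -/
def IsMarking (Γ : PowerCircuit) (M : Fin Γ.n → ℤ) : Prop :=
  ∀ P, M P = -1 ∨ M P = 0 ∨ M P = 1

/-- A marking `M` is *compact* if for all distinct nodes `P, Q` in its support
`|ε(Λ_P) − ε(Λ_Q)| ≥ 2`. -/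
def CompactM (Γ : PowerCircuit) (M : Fin Γ.n → ℤ) : Prop :=
  ∀ P Q, P ≠ Q → M P ≠ 0 → M Q ≠ 0 → 2 ≤ |Γ.lamVal P - Γ.lamVal Q|

/-- A power circuit is *reduced* if its nodes (as listed) are strictly increasing in
evaluation and all successor markings are compact. -/
def Reduced (Γ : PowerCircuit) : Prop :=
  (∀ i j : Fin Γ.n, i < j → Γ.ε i < Γ.ε j) ∧ ∀ P, Γ.CompactM (Γ.δ P)

end PowerCircuit

namespace PowerCircuit

/-- The chain starts of a (reduced) power circuit: nodes which are not the double of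
their immediate predecessor in the sorted node list.  For a reduced power circuit the
maximal chains partition the node set and are in bijection with their start nodes, so
the number of maximal chains is the number of chain starts. -/
noncomputable def chainCount (Γ : PowerCircuit) : ℕ :=
  {i : Fin Γ.n | (i : ℕ) = 0 ∨
     ∀ j : Fin Γ.n, (j : ℕ) + 1 = (i : ℕ) → Γ.ε i ≠ 2 * Γ.ε j}.ncard

end PowerCircuit



open NAFAux in
theorem main_construction (n : ℕ) (hn : 1 ≤ n) (k : Fin n → ℕ) (c : Fin n → Fin n → ℤ)
    (hc : ∀ P Q, c P Q = -1 ∨ c P Q = 0 ∨ c P Q = 1)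
    (hk : ∀ P, (k P : ℤ) = ∑ Q, c P Q * 2^(k Q))
    (M : Fin n → ℤ) (hM : ∀ P, M P = -1 ∨ M P = 0 ∨ M P = 1) :
    ∃ (Γ : PowerCircuit) (Mt : Fin Γ.n → ℤ),
      Γ.Reduced ∧ Γ.IsMarking Mt ∧ Γ.CompactM Mt ∧
      Γ.evalM Mt = ((∑ P, M P * 2^(k P) : ℤ) : ℝ) ∧
      Γ.chainCount ≤ n + 1 ∧
      (Γ.n : ℝ) ≤ ((n:ℝ)+1)^2 * (Real.logb 2 n + 2) := by
  classical
  set S : Finset ℕ := SS n k with hS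
  set N : ℕ := S.card with hN
  set e : Fin N ≃o {x // x ∈ S} := S.orderIsoOfFin rfl with he
  set sv : Fin N → ℕ := fun i => ((e i : {x // x ∈ S}) : ℕ) with hsv
  have hsv_mem : ∀ i, sv i ∈ S := fun i => (e i).2
  have hsv_mono : StrictMono sv := by
    intro i j hij
    exact Subtype.coe_lt_coe.mpr (e.strictMono hij)
  have hsv_surj : ∀ v ∈ S, ∃ i, sv i = v := by
    intro v hv
    exact ⟨e.symm ⟨v, hv⟩, by simp [hsv]⟩
  have hclo : ∀ (i : Fin N) (p : ℕ), D (sv i : ℤ) p ≠ 0 → p ∈ S ∧ p < sv i :=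
    fun i p hp => closure_SS n k c hc hk (sv i) (hsv_mem i) p hp
  have hsumFin : ∀ x : ℤ, (∀ p, D x p ≠ 0 → p ∈ S) →
      ∑ i : Fin N, D x (sv i) * 2^(sv i) = x := by
    intro x hx
    have h1 : ∑ i : Fin N, D x (sv i) * 2^(sv i) = ∑ p ∈ S, D x p * 2^p := by
      rw [← Finset.sum_coe_sort S (fun p => D x p * 2^p)]
      exact Fintype.sum_equiv e.toEquiv _ _ (fun i => rfl)
    rw [h1]
    exact sum_over_S S x hx
  have hsumR : ∀ x : ℤ, (∀ p, D x p ≠ 0 → p ∈ S) →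
      (∑ i : Fin N, ((D x (sv i) : ℤ) : ℝ) * (2:ℝ)^(sv i)) = (x : ℝ) := by
    intro x hx
    have h0 := hsumFin x hx
    calc (∑ i : Fin N, ((D x (sv i) : ℤ) : ℝ) * (2:ℝ)^(sv i))
        = ((∑ i : Fin N, D x (sv i) * 2^(sv i) : ℤ) : ℝ) := by push_cast; ring
      _ = (x : ℝ) := by rw [h0]
  have hnodeclo : ∀ i : Fin N, ∀ p, D (sv i : ℤ) p ≠ 0 → p ∈ S := fun i p hp => (hclo i p hp).1
  have pf_acyc : WellFounded fun Q P : Fin N => D (sv P : ℤ) (sv Q) ≠ 0 := by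
    refine Subrelation.wf (r := fun Q P : Fin N => Q < P) ?_ wellFounded_lt
    intro Q P h
    exact hsv_mono.lt_iff_lt.mp (hclo P (sv Q) h).2
  have pf_eq : ∀ i : Fin N, (2:ℝ)^(sv i)
      = (2:ℝ) ^ (∑ j : Fin N, ((D (sv i : ℤ) (sv j) : ℤ) : ℝ) * (2:ℝ)^(sv j)) := by
    intro i
    have h1 : (∑ j : Fin N, ((D (sv i : ℤ) (sv j) : ℤ) : ℝ) * (2:ℝ)^(sv j))
        = ((sv i : ℕ) : ℝ) := by
      rw [hsumR (sv i : ℤ) (hnodeclo i)]; norm_num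
    rw [h1]
    exact (Real.rpow_natCast 2 (sv i)).symm
  set Γ : PowerCircuit :=
    { n := N
      δ := fun i j => D (sv i : ℤ) (sv j)
      δ_range := fun i j => D_range _ _
      acyclic := pf_acyc
      ε := fun i => (2:ℝ)^(sv i)
      ε_eq := pf_eq
      ε_pow := fun i => ⟨sv i, rfl⟩ } with hΓ
  set x0 : ℤ := ∑ P, M P * 2^(k P) with hx0
  have hx0clo : ∀ p, D x0 p ≠ 0 → p ∈ S := by
    intro p hp
    by_contra hmem
    have h0 := digit_zero_out n k M
      (fun Q => by rcases hM Q with h'|h'|h' <;> simp [h']) 0 (by omega) p hmem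
    rw [Nat.cast_zero, add_zero] at h0
    exact hp h0
  have hlam : ∀ q : Fin N, Γ.lamVal q = ((sv q : ℕ) : ℝ) := by
    intro q
    show (∑ r : Fin N, ((D (sv q : ℤ) (sv r) : ℤ) : ℝ) * (2:ℝ)^(sv r)) = _
    rw [hsumR (sv q : ℤ) (hnodeclo q)]; norm_num
  refine ⟨Γ, fun j => D x0 (sv j), ⟨?_, ?_⟩, fun j => D_range _ _, ?_, ?_, ?_, ?_⟩
  · -- strictly increasing ε
    intro i j hij
    have h := hsv_mono hij
    exact pow_lt_pow_right₀ (by norm_num) h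
  · -- compact successor markings
    intro P i j hij hi hj
    rw [hlam i, hlam j]
    have hi' : D (sv P : ℤ) (sv i) ≠ 0 := hi
    have hj' : D (sv P : ℤ) (sv j) ≠ 0 := hj
    rcases Nat.lt_or_ge (sv i) (sv j) with h|h
    · exact abs_real_ge_two _ _ (nonadjacent _ _ _ hi' hj' h)
    · have hne : sv i ≠ sv j := fun hh => hij (hsv_mono.injective hh)
      have h' : sv j < sv i := by omega
      rw [abs_sub_comm]
      exact abs_real_ge_two _ _ (nonadjacent _ _ _ hj' hi' h')
  · -- CompactM Mt
    intro i j hij hi hj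
    rw [hlam i, hlam j]
    have hi' : D x0 (sv i) ≠ 0 := hi
    have hj' : D x0 (sv j) ≠ 0 := hj
    rcases Nat.lt_or_ge (sv i) (sv j) with h|h
    · exact abs_real_ge_two _ _ (nonadjacent _ _ _ hi' hj' h)
    · have hne : sv i ≠ sv j := fun hh => hij (hsv_mono.injective hh)
      have h' : sv j < sv i := by omega
      rw [abs_sub_comm]
      exact abs_real_ge_two _ _ (nonadjacent _ _ _ hj' hi' h')
  · -- evalM
    show (∑ q : Fin N, ((D x0 (sv q) : ℤ) : ℝ) * (2:ℝ)^(sv q)) = _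
    rw [hsumR x0 hx0clo]
  · -- chainCount
    set L : Finset ℕ := insert 0 (Finset.univ.image k) with hLdef
    have hLcard : L.card ≤ n + 1 := by
      refine le_trans (Finset.card_insert_le _ _) ?_
      have h1 := Finset.card_image_le (s := (Finset.univ : Finset (Fin n))) (f := k)
      simp only [Finset.card_univ, Fintype.card_fin] at h1
      omega
    have hmaps : ∀ i : Fin N,
        ((i : ℕ) = 0 ∨ ∀ j : Fin N, (j : ℕ) + 1 = (i : ℕ) →
          Γ.ε i ≠ 2 * Γ.ε j) → sv i ∈ L := by
      intro i hi
      have hmin : (i : ℕ) = 0 → sv i ∈ L := by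
        intro hi0
        obtain ⟨i0, hi0'⟩ := hsv_surj 0 (zero_mem_SS n k)
        have hle : i ≤ i0 := by
          have : (i : ℕ) ≤ (i0 : ℕ) := by omega
          exact this
        have h1 : sv i ≤ sv i0 := hsv_mono.le_iff_le.mpr hle
        rw [hi0'] at h1
        have : sv i = 0 := by omega
        rw [this]; exact Finset.mem_insert_self _ _
      rcases hi with hi0 | hstart
      · exact hmin hi0
      rcases Nat.eq_zero_or_pos (sv i) with hz|hpos
      · rw [hz]; exact Finset.mem_insert_self _ _
      rcases Nat.eq_zero_or_pos (i : ℕ) with hiz|hipos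
      · exact hmin hiz
      have hpred : sv i - 1 ∉ S := by
        intro hmem
        obtain ⟨j', hj'⟩ := hsv_surj (sv i - 1) hmem
        set jj : Fin N := ⟨(i:ℕ) - 1, by omega⟩ with hjj
        have hj'i : j' < i := by
          have h1 : sv j' < sv i := by omega
          exact hsv_mono.lt_iff_lt.mp h1
        have hj'jj : j' ≤ jj := by
          have h1 : (j' : ℕ) < (i : ℕ) := hj'i
          show (j' : ℕ) ≤ (jj : ℕ)
          simp only [hjj]
          omega
        have h1 : sv j' ≤ sv jj := hsv_mono.le_iff_le.mpr hj'jj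
        have h2 : sv jj < sv i := hsv_mono (by
          show (jj : ℕ) < (i : ℕ)
          simp only [hjj]
          omega)
        have h3 : sv jj = sv i - 1 := by omega
        refine hstart jj (by simp only [hjj]; omega) ?_
        show (2:ℝ)^(sv i) = 2 * (2:ℝ)^(sv jj)
        rw [h3]
        have h4 : sv i = (sv i - 1) + 1 := by omega
        conv_lhs => rw [h4]
        rw [pow_succ]
        ring
      rcases Finset.mem_union.mp (hsv_mem i) with hb | hblk
      · exfalso
        apply hpred
        refine Finset.mem_union_left _ (Finset.mem_range.mpr ?_)
        have := Finset.mem_range.mp hb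
        omega
      · obtain ⟨P, _, hP⟩ := Finset.mem_biUnion.mp hblk
        have hP' := Finset.mem_Ico.mp hP
        rcases Nat.eq_or_lt_of_le hP'.1 with heq|hlt
        · rw [← heq]
          exact Finset.mem_insert_of_mem (Finset.mem_image.mpr ⟨P, Finset.mem_univ P, rfl⟩)
        · exfalso
          apply hpred
          exact Finset.mem_union_right _ (Finset.mem_biUnion.mpr
            ⟨P, Finset.mem_univ P, Finset.mem_Ico.mpr ⟨by omega, by omega⟩⟩)
    unfold PowerCircuit.chainCount
    refine le_trans ?_ hLcard
    have hfin : (↑L : Set ℕ).Finite := L.finite_toSet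
    have h1 := Set.ncard_le_ncard_of_injOn (fun i => sv i)
      (fun i hi => Finset.mem_coe.mpr (hmaps i hi))
      (Set.injOn_of_injective hsv_mono.injective)
      hfin
    rw [Set.ncard_coe_finset] at h1
    exact h1
  · -- size
    show (N : ℝ) ≤ _
    have hcard : S.card ≤ (bB n + 1) + n * (wB n + 1) := card_SS n k
    rcases Nat.lt_or_ge n 2 with h2|h2
    · -- n = 1
      have hn1 : n = 1 := by omega
      subst hn1
      have hw : wB 1 = 2 := by
        show Nat.log2 3 + 1 = 2
        rw [log2_eq (v := 1) (by norm_num) (by norm_num)]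
      have hb : bB 1 = 3 := by
        show Nat.log2 (3 * wB 1) + 1 = 3
        rw [hw]
        rw [log2_eq (v := 2) (by norm_num) (by norm_num)]
      have hN7 : N ≤ 7 := by
        rw [hw, hb] at hcard
        omega
      have hN7' : (N : ℝ) ≤ 7 := by exact_mod_cast hN7
      have hlog1 : Real.logb 2 ((1:ℕ):ℝ) = 0 := by norm_num
      rw [hlog1]
      have h8 : (((1:ℕ):ℝ)+1)^2 * (0+2) = 8 := by norm_num
      rw [h8]
      linarith
    · -- n ≥ 2
      have hw := wB_le n hn
      have hb := bB_le n hn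
      have hnat : (bB n + 1) + n * (wB n + 1) ≤ (n+1)^2 * (Nat.log2 n + 2) := by
        have e1 : n * (wB n + 1) ≤ n * (Nat.log2 n + 4) := Nat.mul_le_mul_left n (by omega)
        have e5 : n * (Nat.log2 n + 4) = n * Nat.log2 n + 4 * n := by ring
        have e6 : (n+1)^2 * (Nat.log2 n + 2)
            = n*n*Nat.log2 n + 2*(n*Nat.log2 n) + Nat.log2 n + 2*(n*n) + 4*n + 2 := by ring
        have e7 : n * Nat.log2 n ≤ n*n*Nat.log2 n := by
          have h9 : n ≤ n * n := Nat.le_mul_of_pos_left n (by omega)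
          exact Nat.mul_le_mul_right _ h9
        have e8 : 4 ≤ n * n := Nat.mul_le_mul h2 h2
        omega
      have hNle : N ≤ (n+1)^2 * (Nat.log2 n + 2) := by omega
      have hlog : ((Nat.log2 n : ℕ) : ℝ) ≤ Real.logb 2 n := by
        rw [Real.le_logb_iff_rpow_le (by norm_num) (by positivity)]
        rw [Real.rpow_natCast]
        exact_mod_cast Nat.log2_self_le (by omega)
      have hcast : ((((n+1)^2 * (Nat.log2 n + 2) : ℕ)) : ℝ) ≤ ((n:ℝ)+1)^2 * (Real.logb 2 n + 2) := by
        push_cast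
        have hpos : (0:ℝ) ≤ ((n:ℝ)+1)^2 := by positivity
        nlinarith
      refine le_trans ?_ hcast
      exact_mod_cast hNle


/-- For every power circuit `(Π,δ_Π)` with `n ≥ 1` nodes and every
marking `M` on `Π` there exist a reduced power circuit `(Γ,δ)` and a compact marking
`M̃` on `Γ` with `ε(M̃) = ε(M)`, such that `Γ` has at most `n + 1` maximal chains and
`|Γ| ≤ (n+1)² · (log₂ n + 2)`. -/
theorem power_circuit_reduction (Pi : PowerCircuit) (hn : 1 ≤ Pi.n)
    (M : Fin Pi.n → ℤ) (hM : Pi.IsMarking M) :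
    ∃ (Γ : PowerCircuit) (Mt : Fin Γ.n → ℤ),
      Γ.Reduced ∧ Γ.IsMarking Mt ∧ Γ.CompactM Mt ∧
      Γ.evalM Mt = Pi.evalM M ∧
      Γ.chainCount ≤ Pi.n + 1 ∧
      (Γ.n : ℝ) ≤ ((Pi.n : ℝ) + 1) ^ 2 * (Real.logb 2 (Pi.n : ℝ) + 2) := by
  classical
  choose k hk using Pi.ε_pow
  have hrpowinj : ∀ a b : ℝ, (2:ℝ)^a = (2:ℝ)^b → a = b := by
    intro a b h
    by_contra hne
    rcases lt_or_gt_of_ne hne with h'|h'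
    · have h2 := (Real.rpow_lt_rpow_left_iff (by norm_num : (1:ℝ) < 2)).mpr h'
      rw [h] at h2; exact lt_irrefl _ h2
    · have h2 := (Real.rpow_lt_rpow_left_iff (by norm_num : (1:ℝ) < 2)).mpr h'
      rw [h] at h2; exact lt_irrefl _ h2
  have hint : ∀ P, (k P : ℤ) = ∑ Q, Pi.δ P Q * 2^(k Q) := by
    intro P
    have h1 := Pi.ε_eq P
    rw [hk P] at h1
    have h2 : (∑ Q, (Pi.δ P Q : ℝ) * Pi.ε Q) = ((∑ Q, Pi.δ P Q * 2^(k Q) : ℤ) : ℝ) := by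
      push_cast
      refine Finset.sum_congr rfl (fun Q _ => ?_)
      rw [hk Q]
    rw [h2] at h1
    rw [← Real.rpow_natCast 2 (k P)] at h1
    have h3 := hrpowinj _ _ h1
    exact_mod_cast h3
  obtain ⟨Γ, Mt, hred, hmark, hcomp, heval, hchain, hsize⟩ :=
    main_construction Pi.n hn k Pi.δ Pi.δ_range hint M hM
  refine ⟨Γ, Mt, hred, hmark, hcomp, ?_, hchain, hsize⟩
  rw [heval]
  unfold PowerCircuit.evalM
  push_cast
  refine Finset.sum_congr rfl (fun Q _ => ?_)
  rw [hk Q]
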